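/- Let G be a simple 3-connected graph on n ≥ 5 vertices with maximum degree at most 4 (so every vertex has degree 3 or 4). Then there exists a simple graph G' on the same vertex set with every edge of G an edge of G', such that G' is 3-connected, has maximum degree at most 4, and has at most two vertices of degree 3 (all other vertices having degree exactly 4). -/

import Mathlib

/-- A graph on more than 3 vertices is 3-connected if deleting any two vertices
leaves a connected graph. -/
def ThreeConnected {V : Type} [Fintype V] (G : SimpleGraph V) : Prop :=
  3 < Fintype.card V ∧ ∀ u v : V, (G.induce ({u, v}ᶜ : Set V)).Connected

open SimpleGraph

lemma walk_closed {W : Type*} {H : SimpleGraph W} {T : Set W}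
    (hT : ∀ x ∈ T, ∀ y, H.Adj x y → y ∈ T) :
    ∀ {a b : W}, H.Walk a b → a ∈ T → b ∈ T := by
  intro a b w
  induction w with
  | nil => exact id
  | cons h p ih => exact fun ha => ih (hT _ ha _ h)

lemma threeConnected_mono {V : Type} [Fintype V] {G H : SimpleGraph V}
    (hle : G ≤ H) (h : ThreeConnected G) : ThreeConnected H := by
  refine ⟨h.1, fun u v => (h.2 u v).mono ?_⟩
  intro a b hab
  exact hle hab

lemma cover2 {V : Type} [Fintype V] (N : Set V) (h : N.ncard ≤ 2) (v : V) (hv : v ∉ N)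
    (hcard : 5 ≤ Fintype.card V) : ∃ a b : V, a ≠ v ∧ b ≠ v ∧ N ⊆ {a, b} := by
  have hnt : Nontrivial V := Fintype.one_lt_card_iff_nontrivial.mp (by omega)
  have h0 : N.ncard = 0 ∨ N.ncard = 1 ∨ N.ncard = 2 := by omega
  rcases h0 with h0 | h0 | h0
  · obtain ⟨c, hc⟩ := exists_ne v
    have : N = ∅ := (Set.ncard_eq_zero (Set.toFinite _)).mp h0
    exact ⟨c, c, hc, hc, by simp [this]⟩
  · obtain ⟨a, ha⟩ := Set.ncard_eq_one.mp h0
    refine ⟨a, a, ?_, ?_, by simp [ha]⟩ <;>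
    · rintro rfl; exact hv (ha ▸ rfl)
  · obtain ⟨a, b, hab, hN⟩ := Set.ncard_eq_two.mp h0
    refine ⟨a, b, ?_, ?_, by simp [hN]⟩
    · rintro rfl; exact hv (hN ▸ Set.mem_insert _ _)
    · rintro rfl; exact hv (hN ▸ Set.mem_insert_of_mem _ rfl)

lemma exists_fifth {V : Type} [Fintype V] (hcard : 5 ≤ Fintype.card V) (a b c d : V) :
    ∃ w : V, w ≠ a ∧ w ≠ b ∧ w ≠ c ∧ w ≠ d := by
  classical
  by_contra hno
  push_neg at hno
  have hsub : (Finset.univ : Finset V) ⊆ {a, b, c, d} := by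
    intro x _
    simp only [Finset.mem_insert, Finset.mem_singleton]
    by_contra hx
    push_neg at hx
    exact hx.2.2.2 (hno x hx.1 hx.2.1 hx.2.2.1)
  have := Finset.card_le_card hsub
  have h4 : ({a, b, c, d} : Finset V).card ≤ 4 := by
    apply le_trans (Finset.card_insert_le _ _)
    have := Finset.card_insert_le b ({c, d} : Finset V)
    have := Finset.card_insert_le c ({d} : Finset V)
    simp_all
    omega
  rw [Finset.card_univ] at this
  omega

lemma min_degree_three {V : Type} [Fintype V] {G : SimpleGraph V}
    (hcard : 5 ≤ Fintype.card V) (h3c : ThreeConnected G) (v : V) :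
    3 ≤ (G.neighborSet v).ncard := by
  by_contra hlt
  push_neg at hlt
  obtain ⟨a, b, hav, hbv, hsub⟩ := cover2 (G.neighborSet v) (by omega) v
    (fun h => G.irrefl h) hcard
  obtain ⟨w, hwa, hwb, hwv, _⟩ := exists_fifth hcard a b v v
  have hvK : v ∈ ({a, b}ᶜ : Set V) := by simp [hav.symm, hbv.symm]
  have hwK : w ∈ ({a, b}ᶜ : Set V) := by simp [hwa, hwb]
  have hconn := h3c.2 a b
  obtain ⟨wlk⟩ := hconn.preconnected ⟨v, hvK⟩ ⟨w, hwK⟩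
  have : (⟨w, hwK⟩ : ({a, b}ᶜ : Set V)) ∈ {x : ({a, b}ᶜ : Set V) | (x : V) = v} := by
    refine walk_closed ?_ wlk rfl
    rintro ⟨x, hx⟩ hxv y hadj
    simp only [Set.mem_setOf_eq] at hxv
    subst hxv
    have : (y : V) ∈ G.neighborSet (x : V) := hadj
    have := hsub this
    exact absurd this y.2
  exact hwv this

/-- Any simple 3-connected graph on `n ≥ 5` vertices with maximum degree at
most 4 can be augmented (by adding edges on the same vertex set) to a simple
3-connected graph of maximum degree at most 4 that has at most two vertices of
degree 3, all other vertices having degree exactly 4. -/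
theorem augment_to_almost_four_regular {V : Type} [Fintype V]
    (G : SimpleGraph V) (hn : 5 ≤ Fintype.card V)
    (h3c : ThreeConnected G) (hdeg : ∀ v : V, (G.neighborSet v).ncard ≤ 4) :
    ∃ G' : SimpleGraph V, G ≤ G' ∧ ThreeConnected G' ∧
      (∀ v : V, (G'.neighborSet v).ncard ≤ 4) ∧
      {v : V | (G'.neighborSet v).ncard = 3}.ncard ≤ 2 ∧
      (∀ v : V, (G'.neighborSet v).ncard ≠ 3 → (G'.neighborSet v).ncard = 4) := by
  classical
  set S : Set (SimpleGraph V) := {H | G ≤ H ∧ ∀ v, (H.neighborSet v).ncard ≤ 4} with hS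
  obtain ⟨H, hHS, hmax⟩ := Set.Finite.exists_maximalFor
    (fun H : SimpleGraph V => H.edgeSet.ncard) S (Set.toFinite S) ⟨G, le_rfl, hdeg⟩
  obtain ⟨hGH, hH4⟩ := hHS
  have h3cH : ThreeConnected H := threeConnected_mono hGH h3c
  have hH3 : ∀ v, 3 ≤ (H.neighborSet v).ncard := min_degree_three hn h3cH
  have hd : ∀ v, (H.neighborSet v).ncard = H.degree v := fun v => by
    rw [← SimpleGraph.card_neighborSet_eq_degree, Set.ncard_eq_toFinset_card',
      Set.toFinset_card]
  refine ⟨H, hGH, h3cH, hH4, ?_, fun v hv => by have := hH3 v; have := hH4 v; omega⟩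
  -- the degree-3 count
  by_contra hgt
  push_neg at hgt
  set s3 : Finset V := Finset.univ.filter (fun v => (H.neighborSet v).ncard = 3) with hs3
  have hset : {v : V | (H.neighborSet v).ncard = 3}.ncard = s3.card := by
    rw [Set.ncard_eq_toFinset_card', Set.toFinset_setOf]
  have hk3 : 3 ≤ s3.card := by rw [hset] at hgt; omega
  -- parity: s3.card is even
  have hsum := H.sum_degrees_eq_twice_card_edges
  have hsplit : ∑ v, H.degree v = 3 * s3.card + 4 * (Finset.univ.filter
      (fun v => ¬ (H.neighborSet v).ncard = 3)).card := by
    rw [← Finset.sum_filter_add_sum_filter_not Finset.univ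
      (fun v => (H.neighborSet v).ncard = 3) (fun v => H.degree v)]
    congr 1
    · rw [Finset.sum_congr rfl (fun v hv => ?_), Finset.sum_const, smul_eq_mul, mul_comm]
      rw [Finset.mem_filter] at hv
      rw [← hd]; exact hv.2
    · rw [Finset.sum_congr rfl (fun v hv => ?_), Finset.sum_const, smul_eq_mul, mul_comm]
      rw [Finset.mem_filter] at hv
      have := hH3 v; have := hH4 v
      rw [← hd]; omega
  have hpar : 2 ∣ s3.card := by
    have hnn := Finset.card_filter_add_card_filter_not (s := Finset.univ)
      (p := fun v => (H.neighborSet v).ncard = 3)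
    omega
  have hk4 : 4 ≤ s3.card := by omega
  -- extract four distinct degree-3 vertices
  obtain ⟨a, ha⟩ := Finset.card_pos.mp (show 0 < s3.card by omega)
  have hca : 3 ≤ (s3.erase a).card := by rw [Finset.card_erase_of_mem ha]; omega
  obtain ⟨b, hb⟩ := Finset.card_pos.mp (show 0 < (s3.erase a).card by omega)
  have hcb : 2 ≤ ((s3.erase a).erase b).card := by
    rw [Finset.card_erase_of_mem hb]; omega
  obtain ⟨c, hc⟩ := Finset.card_pos.mp (show 0 < ((s3.erase a).erase b).card by omega)
  have hcc : 1 ≤ (((s3.erase a).erase b).erase c).card := by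
    rw [Finset.card_erase_of_mem hc]; omega
  obtain ⟨d, hdm⟩ := Finset.card_pos.mp (show 0 < (((s3.erase a).erase b).erase c).card
    by omega)
  rw [Finset.mem_erase, Finset.mem_erase, Finset.mem_erase] at hdm
  rw [Finset.mem_erase, Finset.mem_erase] at hc
  rw [Finset.mem_erase] at hb
  obtain ⟨hdc, hdb, hda, hd3⟩ := hdm
  obtain ⟨hcb', hca', hc3⟩ := hc
  obtain ⟨hba, hb3⟩ := hb
  have hmem3 : ∀ x ∈ s3, (H.neighborSet x).ncard = 3 := fun x hx =>
    (Finset.mem_filter.mp hx).2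
  by_cases hadj : ∀ x ∈ s3, ∀ y ∈ s3, x ≠ y → H.Adj x y
  · -- the four degree-3 vertices are pairwise adjacent: contradiction with 3-connectivity
    have hNa : H.neighborSet a = {b, c, d} := by
      refine (Set.eq_of_subset_of_ncard_le ?_ ?_ (Set.toFinite _)).symm
      · intro z hz
        rcases hz with rfl | rfl | rfl
        · exact hadj a ha z hb3 (Ne.symm hba)
        · exact hadj a ha z hc3 (Ne.symm hca')
        · exact hadj a ha z hd3 (Ne.symm hda)
      · rw [hmem3 a ha]
        exact le_of_eq (Set.ncard_eq_three.mpr ⟨b, c, d, hcb'.symm, hdb.symm, hdc.symm, rfl⟩).symm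
    have hNd : H.neighborSet d = {a, b, c} := by
      refine (Set.eq_of_subset_of_ncard_le ?_ ?_ (Set.toFinite _)).symm
      · intro z hz
        rcases hz with rfl | rfl | rfl
        · exact hadj d hd3 z ha hda
        · exact hadj d hd3 z hb3 hdb
        · exact hadj d hd3 z hc3 hdc
      · rw [hmem3 d hd3]
        exact le_of_eq (Set.ncard_eq_three.mpr ⟨a, b, c, hba.symm, hca'.symm, hcb'.symm, rfl⟩).symm
    obtain ⟨w, hwa, hwb, hwc, hwd⟩ := exists_fifth hn a b c d
    have haK : a ∈ ({b, c}ᶜ : Set V) := by simp [Ne.symm hba, Ne.symm hca']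
    have hwK : w ∈ ({b, c}ᶜ : Set V) := by simp [hwb, hwc]
    obtain ⟨wlk⟩ := (h3cH.2 b c).preconnected ⟨a, haK⟩ ⟨w, hwK⟩
    have : (⟨w, hwK⟩ : ({b, c}ᶜ : Set V)) ∈
        {x : ({b, c}ᶜ : Set V) | (x : V) = a ∨ (x : V) = d} := by
      refine walk_closed ?_ wlk (Or.inl rfl)
      rintro ⟨x, hx⟩ hxm ⟨y, hy⟩ hadj'
      simp only [Set.mem_setOf_eq] at hxm ⊢
      have hyK : y ≠ b ∧ y ≠ c := by
        simpa [Set.mem_compl_iff] using hy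
      rcases hxm with rfl | rfl
      · have : y ∈ H.neighborSet x := hadj'
        rw [hNa] at this
        rcases this with rfl | rfl | rfl
        · exact absurd rfl hyK.1
        · exact absurd rfl hyK.2
        · exact Or.inr rfl
      · have : y ∈ H.neighborSet x := hadj'
        rw [hNd] at this
        rcases this with rfl | rfl | rfl
        · exact Or.inl rfl
        · exact absurd rfl hyK.1
        · exact absurd rfl hyK.2
    rcases this with h | h
    · exact hwa h
    · exact hwd h
  · -- two nonadjacent degree-3 vertices: add an edge, contradicting maximality
    push_neg at hadj
    obtain ⟨x, hx3, y, hy3, hxy, hnadj⟩ := hadj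
    set H' := H ⊔ SimpleGraph.edge x y with hH'
    have hH'adj : H'.Adj x y := Or.inr ((SimpleGraph.edge_adj x y x y).mpr ⟨Or.inl ⟨rfl, rfl⟩, hxy⟩)
    have hlt : H < H' := by
      refine lt_of_le_of_ne le_sup_left (fun heq => hnadj ?_)
      rw [heq]; exact hH'adj
    have hH'S : H' ∈ S := by
      refine ⟨le_trans hGH le_sup_left, fun v => ?_⟩
      by_cases hvx : v = x
      · subst hvx
        have hsub : H'.neighborSet v ⊆ insert y (H.neighborSet v) := by
          intro z hz
          rcases hz with hz | hz
          · exact Set.mem_insert_of_mem _ hz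
          · rw [SimpleGraph.edge_adj] at hz
            rcases hz.1 with ⟨_, rfl⟩ | ⟨h1, rfl⟩
            · exact Set.mem_insert _ _
            · exact absurd rfl (h1 ▸ hz.2)
        calc (H'.neighborSet v).ncard ≤ (insert y (H.neighborSet v)).ncard :=
              Set.ncard_le_ncard hsub (Set.toFinite _)
          _ ≤ (H.neighborSet v).ncard + 1 := Set.ncard_insert_le _ _
          _ ≤ 4 := by rw [hmem3 v hx3]
      · by_cases hvy : v = y
        · subst hvy
          have hsub : H'.neighborSet v ⊆ insert x (H.neighborSet v) := by
            intro z hz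
            rcases hz with hz | hz
            · exact Set.mem_insert_of_mem _ hz
            · rw [SimpleGraph.edge_adj] at hz
              rcases hz.1 with ⟨h1, rfl⟩ | ⟨_, rfl⟩
              · exact absurd rfl (h1 ▸ hz.2).symm
              · exact Set.mem_insert _ _
          calc (H'.neighborSet v).ncard ≤ (insert x (H.neighborSet v)).ncard :=
                Set.ncard_le_ncard hsub (Set.toFinite _)
            _ ≤ (H.neighborSet v).ncard + 1 := Set.ncard_insert_le _ _
            _ ≤ 4 := by rw [hmem3 v hy3]
        · have hsub : H'.neighborSet v ⊆ H.neighborSet v := by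
            intro z hz
            rcases hz with hz | hz
            · exact hz
            · rw [SimpleGraph.edge_adj] at hz
              rcases hz.1 with ⟨rfl, _⟩ | ⟨rfl, _⟩
              · exact absurd rfl hvx
              · exact absurd rfl hvy
          exact le_trans (Set.ncard_le_ncard hsub (Set.toFinite _)) (hH4 v)
    have hle : H.edgeSet.ncard ≤ H'.edgeSet.ncard :=
      Set.ncard_le_ncard (SimpleGraph.edgeSet_subset_edgeSet.mpr hlt.le) (Set.toFinite _)
    have heq : H'.edgeSet.ncard ≤ H.edgeSet.ncard := hmax hH'S hle
    have hltn : H.edgeSet.ncard < H'.edgeSet.ncard :=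
      Set.ncard_lt_ncard (SimpleGraph.edgeSet_ssubset_edgeSet.mpr hlt) (Set.toFinite _)
    omega
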